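/- arXiv:2212.00778 — 2 statements merged into one kernel-verified Lean document; each statement's English description precedes it below -/
import Mathlib

section
/- Let S and S' be nonempty multisets of binary-labeled examples whose edit distance (minimum number of single-element insertions and deletions transforming S into S') is at most 1. Then |g(S) − g(S')| < 2 / max(|S|, |S'|), where g denotes the Gini index. -/
open Classical in
/-- The Gini index of a multiset of binary-labeled examples:
`2 p (1-p)` where `p` is the fraction of `true` labels; `0` for the empty multiset. -/
noncomputable def gini {α : Type*} (S : Multiset (α × Bool)) : ℝ :=
  if S = 0 then 0 else
    let p : ℝ := ((S.filter fun e => e.2 = true).card : ℝ) / S.card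
    2 * p * (1 - p)

/-- `EditPath n S S'` holds iff `S'` can be obtained from `S` by a sequence of `n`
single-element insertions and deletions. -/
def EditPath {α : Type*} : ℕ → Multiset α → Multiset α → Prop
  | 0, S, S' => S = S'
  | n + 1, S, S' => ∃ T : Multiset α, ((∃ a, T = a ::ₘ S) ∨ (∃ a, S = a ::ₘ T)) ∧ EditPath n T S'

/-- The edit distance between two multisets: the minimum number of single-element
insertions and deletions transforming one into the other. -/
noncomputable def editDist {α : Type*} (S S' : Multiset α) : ℕ :=
  sInf {n | EditPath n S S'}

lemma editPath_trans {α : Type*} : ∀ {m n : ℕ} {S T U : Multiset α},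
    EditPath m S T → EditPath n T U → EditPath (m + n) S U := by
  intro m
  induction m with
  | zero => intro n S T U h1 h2; simp only [EditPath] at h1; subst h1; simpa using h2
  | succ k ih =>
      intro n S T U h1 h2
      obtain ⟨V, hV, hpath⟩ := h1
      rw [Nat.succ_add]
      exact ⟨V, hV, ih hpath h2⟩

lemma editPath_to_zero {α : Type*} (S : Multiset α) : EditPath S.card S 0 := by
  induction S using Multiset.induction with
  | empty => rfl
  | cons a s ih =>
      rw [Multiset.card_cons]
      exact ⟨s, Or.inr ⟨a, rfl⟩, ih⟩

lemma editPath_cons {α : Type*} (a : α) : ∀ {n : ℕ} {S T : Multiset α},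
    EditPath n S T → EditPath n (a ::ₘ S) (a ::ₘ T) := by
  intro n
  induction n with
  | zero => intro S T h; have : S = T := h; rw [this]; rfl
  | succ k ih =>
      intro S T h
      obtain ⟨V, hV, hpath⟩ := h
      refine ⟨a ::ₘ V, ?_, ih hpath⟩
      rcases hV with ⟨b, rfl⟩ | ⟨b, rfl⟩
      · exact Or.inl ⟨b, Multiset.cons_swap a b S⟩
      · exact Or.inr ⟨b, Multiset.cons_swap a b V⟩

lemma editPath_from_zero {α : Type*} (S : Multiset α) : EditPath S.card 0 S := by
  induction S using Multiset.induction with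
  | empty => rfl
  | cons a s ih =>
      rw [Multiset.card_cons]
      exact ⟨a ::ₘ 0, Or.inl ⟨a, rfl⟩, editPath_cons a ih⟩

lemma core (a b : ℝ) (ha : 0 ≤ a) (hab : a ≤ b) (hb : 1 ≤ b) :
    |a * (b * (b + 1) - a * (2 * b + 1))| < b ^ 2 * (b + 1) := by
  rw [abs_lt]
  constructor
  · nlinarith [mul_nonneg (mul_nonneg ha (sub_nonneg.2 hab)) (by linarith : (0:ℝ) ≤ 2*b+1),
      sq_nonneg b, mul_nonneg (sq_nonneg b) (sub_nonneg.2 hab)]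
  · nlinarith [sq_nonneg (2 * a - b), sq_nonneg b, mul_nonneg ha (sub_nonneg.2 hab),
      mul_nonneg (mul_nonneg ha ha) (by linarith : (0:ℝ) ≤ 2*b+1)]

lemma gini_insert_bound {α : Type*} (a : α × Bool) (S : Multiset (α × Bool)) (hS : S ≠ 0) :
    |gini S - gini (a ::ₘ S)| < 2 / ((a ::ₘ S).card : ℝ) := by
  have hcard : 1 ≤ S.card := Nat.one_le_iff_ne_zero.2 (by simpa using hS)
  have hkn : (S.filter fun e => e.2 = true).card ≤ S.card :=
    Multiset.card_le_card (Multiset.filter_le _ _)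
  have hb : (1:ℝ) ≤ (S.card : ℝ) := by exact_mod_cast hcard
  set b : ℝ := (S.card : ℝ) with hbdef
  set x : ℝ := ((S.filter fun e => e.2 = true).card : ℝ) with hxdef
  have hx0 : 0 ≤ x := Nat.cast_nonneg _
  have hxb : x ≤ b := by rw [hbdef, hxdef]; exact_mod_cast hkn
  have hb0 : (0:ℝ) < b := by linarith
  have hb1 : (0:ℝ) < b + 1 := by linarith
  have hcard' : ((a ::ₘ S).card : ℝ) = b + 1 := by
    rw [Multiset.card_cons, hbdef]; push_cast; ring
  have hgS : gini S = 2 * (x / b) * (1 - x / b) := by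
    rw [gini, if_neg hS]
  have hne : a ::ₘ S ≠ 0 := by simp
  rw [hcard']
  by_cases hab : a.2 = true
  · have hfilt : ((a ::ₘ S).filter fun e => e.2 = true).card
        = (S.filter fun e => e.2 = true).card + 1 := by
      simp [Multiset.filter_cons, hab]
    have hgS' : gini (a ::ₘ S) = 2 * ((x + 1) / (b + 1)) * (1 - (x + 1) / (b + 1)) := by
      rw [gini, if_neg hne, hfilt, hcard', hxdef]
      push_cast
      ring
    rw [hgS, hgS']
    have e2 : 2 * (x / b) * (1 - x / b) - 2 * ((x + 1) / (b + 1)) * (1 - (x + 1) / (b + 1))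
        = (2 * ((b - x) * (b * (b + 1) - (b - x) * (2 * b + 1)))) / (b ^ 2 * (b + 1) ^ 2) := by
      field_simp
      ring
    rw [e2, abs_div, abs_of_pos (by positivity : (0:ℝ) < b ^ 2 * (b + 1) ^ 2),
      div_lt_div_iff₀ (by positivity) hb1]
    have hc := core (b - x) b (by linarith) (by linarith) hb
    rw [abs_mul, abs_two]
    calc 2 * |(b - x) * (b * (b + 1) - (b - x) * (2 * b + 1))| * (b + 1)
        < 2 * (b ^ 2 * (b + 1)) * (b + 1) := by
          apply mul_lt_mul_of_pos_right _ hb1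
          linarith
      _ = 2 * (b ^ 2 * (b + 1) ^ 2) := by ring
  · have hfilt : ((a ::ₘ S).filter fun e => e.2 = true).card
        = (S.filter fun e => e.2 = true).card := by
      simp [Multiset.filter_cons, hab]
    have hgS' : gini (a ::ₘ S) = 2 * (x / (b + 1)) * (1 - x / (b + 1)) := by
      rw [gini, if_neg hne, hfilt, hcard']
    rw [hgS, hgS']
    have e2 : 2 * (x / b) * (1 - x / b) - 2 * (x / (b + 1)) * (1 - x / (b + 1))
        = (2 * (x * (b * (b + 1) - x * (2 * b + 1)))) / (b ^ 2 * (b + 1) ^ 2) := by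
      field_simp
      ring
    rw [e2, abs_div, abs_of_pos (by positivity : (0:ℝ) < b ^ 2 * (b + 1) ^ 2),
      div_lt_div_iff₀ (by positivity) hb1]
    have hc := core x b hx0 hxb hb
    rw [abs_mul, abs_two]
    calc 2 * |x * (b * (b + 1) - x * (2 * b + 1))| * (b + 1)
        < 2 * (b ^ 2 * (b + 1)) * (b + 1) := by
          apply mul_lt_mul_of_pos_right _ hb1
          linarith
      _ = 2 * (b ^ 2 * (b + 1) ^ 2) := by ring

/-- if nonempty multisets S, S' have edit distance at most 1 then
|g(S) − g(S')| < 2 / max(|S|, |S'|). -/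
theorem gini_smooth_one_edit {α : Type*} (S S' : Multiset (α × Bool))
    (hS : S ≠ 0) (hS' : S' ≠ 0) (h : editDist S S' ≤ 1) :
    |gini S - gini S'| < 2 / (max S.card S'.card : ℝ) := by
  have hne : {n | EditPath n S S'}.Nonempty :=
    ⟨S.card + S'.card, editPath_trans (editPath_to_zero S) (editPath_from_zero S')⟩
  have hmem : EditPath (editDist S S') S S' := Nat.sInf_mem hne
  have hc1 : 1 ≤ S.card := Nat.one_le_iff_ne_zero.2 (by simpa using hS)
  have hc2 : 1 ≤ S'.card := Nat.one_le_iff_ne_zero.2 (by simpa using hS')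
  rcases Nat.le_one_iff_eq_zero_or_eq_one.mp h with h0 | h1
  · rw [h0] at hmem
    have hSS : S = S' := hmem
    subst hSS
    rw [sub_self, abs_zero]
    apply div_pos (by norm_num)
    have h1' : (0:ℝ) < (S.card : ℝ) := by exact_mod_cast hc1
    exact lt_of_lt_of_le h1' (le_max_left _ _)
  · rw [h1] at hmem
    obtain ⟨T, hT, hpath⟩ := hmem
    have hTS' : T = S' := hpath
    rw [hTS'] at hT
    rcases hT with ⟨a, rfl⟩ | ⟨a, hSa⟩
    · have hmax : max (S.card : ℝ) (((a ::ₘ S).card : ℝ)) = ((a ::ₘ S).card : ℝ) :=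
        max_eq_right (by rw [Multiset.card_cons]; push_cast; linarith)
      rw [hmax]
      exact gini_insert_bound a S hS
    · rw [hSa]
      have hmax : max (((a ::ₘ S').card : ℝ)) ((S'.card : ℝ)) = ((a ::ₘ S').card : ℝ) :=
        max_eq_left (by rw [Multiset.card_cons]; push_cast; linarith)
      rw [hmax, abs_sub_comm]
      exact gini_insert_bound a S' hS'
end

section
/- Let S be a nonempty multiset of binary-labeled examples, partitioned by a split into S_u and S_z with |S_u| ≤ |S_z|, and set ν = |S_u|/|S|. If the Gini gain of the split is at least γ > 0, then ν > γ/4; i.e., min(|S_u|, |S_z|) > (γ/4)·|S|. -/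
private lemma gain_lt {ν q r : ℝ} (h1 : 0 < ν) (h3 : 0 ≤ q) (h4 : q ≤ 1)
    (h5 : 0 ≤ r) (h6 : r ≤ 1) :
    2*(ν*r+(1-ν)*q)*(1-(ν*r+(1-ν)*q)) - ν*(2*r*(1-r)) - (1-ν)*(2*q*(1-q)) < 4*ν := by
  have key : 2*(ν*r+(1-ν)*q)*(1-(ν*r+(1-ν)*q)) - ν*(2*r*(1-r)) - (1-ν)*(2*q*(1-q))
      = 2*ν*(1-ν)*(r-q)^2 := by ring
  have hs : (r-q)^2 ≤ 1 := by nlinarith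
  rw [key]
  nlinarith [mul_pos h1 h1, sq_nonneg (r-q)]

/-- if a split partitions a nonempty S into S_u, S_z with |S_u| ≤ |S_z|
and has Gini gain at least γ > 0, then ν = |S_u|/|S| > γ/4, i.e.
min(|S_u|,|S_z|) > (γ/4)·|S|. -/
theorem balanced_split_of_gain {α : Type*} (Su Sz : Multiset (α × Bool)) (γ : ℝ)
    (hne : Su + Sz ≠ 0) (hle : Su.card ≤ Sz.card) (hγ : 0 < γ)
    (hgain : γ ≤ gini (Su + Sz)
        - ((Su.card : ℝ) / (Su + Sz).card) * gini Su
        - ((Sz.card : ℝ) / (Su + Sz).card) * gini Sz) :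
    γ / 4 < (Su.card : ℝ) / (Su + Sz).card ∧
      (γ / 4) * ((Su + Sz).card : ℝ) < (min Su.card Sz.card : ℕ) := by
  classical
  by_cases hSu : Su = 0
  · exfalso
    subst hSu
    rw [zero_add] at hgain
    simp only [Multiset.card_zero, Nat.cast_zero, zero_div, zero_mul, sub_zero] at hgain
    have hSz : Sz ≠ 0 := by simpa using hne
    have hb : (0:ℝ) < Sz.card := by
      exact_mod_cast Multiset.card_pos.2 hSz
    rw [div_self hb.ne', one_mul, sub_self] at hgain
    linarith
  · have hSz : Sz ≠ 0 := by
      intro h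
      apply hSu
      have := hle
      rw [h] at this
      simpa using Multiset.card_eq_zero.1 (Nat.le_zero.1 (by simpa using this))
    set u : ℝ := ((Su.filter fun e => e.2 = true).card : ℝ) with hu
    set z : ℝ := ((Sz.filter fun e => e.2 = true).card : ℝ) with hz
    set a : ℝ := (Su.card : ℝ) with ha
    set b : ℝ := (Sz.card : ℝ) with hb
    have hapos : 0 < a := by rw [ha]; exact_mod_cast Multiset.card_pos.2 hSu
    have hbpos : 0 < b := by rw [hb]; exact_mod_cast Multiset.card_pos.2 hSz
    have hnpos : 0 < a + b := by linarith
    have hua : u ≤ a := by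
      rw [hu, ha]; exact_mod_cast Multiset.card_le_card (Multiset.filter_le _ _)
    have hzb : z ≤ b := by
      rw [hz, hb]; exact_mod_cast Multiset.card_le_card (Multiset.filter_le _ _)
    have hu0 : 0 ≤ u := by positivity
    have hz0 : 0 ≤ z := by positivity
    have hcard : ((Su + Sz).card : ℝ) = a + b := by
      rw [ha, hb, Multiset.card_add]; push_cast; ring
    have hfilt : (((Su + Sz).filter fun e => e.2 = true).card : ℝ) = u + z := by
      rw [Multiset.filter_add, Multiset.card_add]; push_cast; ring
    set ν : ℝ := a / (a + b) with hν
    have hνpos : 0 < ν := div_pos hapos hnpos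
    have h1ν : (1 : ℝ) - ν = b / (a + b) := by
      rw [hν]; field_simp; ring
    set q : ℝ := z / b with hq
    set r : ℝ := u / a with hr
    have hgS : gini (Su + Sz) = 2*(ν*r+(1-ν)*q)*(1-(ν*r+(1-ν)*q)) := by
      rw [gini, if_neg hne]
      have hp : (((Su + Sz).filter fun e => e.2 = true).card : ℝ) / ((Su + Sz).card : ℝ)
          = ν*r+(1-ν)*q := by
        rw [hfilt, hcard, h1ν, hν, hq, hr]
        field_simp
      simp only [hp]
    have hgSu : gini Su = 2*r*(1-r) := by
      rw [gini, if_neg hSu]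
    have hgSz : gini Sz = 2*q*(1-q) := by
      rw [gini, if_neg hSz]
    have hq0 : 0 ≤ q := div_nonneg hz0 hbpos.le
    have hq1 : q ≤ 1 := (div_le_one hbpos).2 hzb
    have hr0 : 0 ≤ r := div_nonneg hu0 hapos.le
    have hr1 : r ≤ 1 := (div_le_one hapos).2 hua
    have hgain' : γ ≤ 2*(ν*r+(1-ν)*q)*(1-(ν*r+(1-ν)*q)) - ν*(2*r*(1-r)) - (1-ν)*(2*q*(1-q)) := by
      rw [hgS, hgSu, hgSz, hcard, ← hν, ← h1ν] at hgain
      exact hgain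
    have hmain : γ < 4 * ν := lt_of_le_of_lt hgain' (gain_lt hνpos hq0 hq1 hr0 hr1)
    have hg4 : γ / 4 < ν := by linarith
    constructor
    · rw [hcard]; exact hg4
    · have hmin : (min Su.card Sz.card : ℕ) = Su.card := min_eq_left hle
      rw [hmin, hcard, ← ha]
      calc γ / 4 * (a + b) < ν * (a + b) := by
            exact mul_lt_mul_of_pos_right hg4 hnpos
        _ = a := by rw [hν]; field_simp
end
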